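/- (Proposition 2, FTPL vs. DOPA.) Let K ≥ 2 and let F_1,…,F_K : ℝ → [0,1] be cumulative distribution functions, each continuous, each strictly increasing at every point s ∈ ℝ (so that 0 < F_k(s) < 1 for all s), and each with finite first moment. Fix u ∈ ℝ^K and let p(u) be the unique maximizer of max_{p ∈ Δ^K} [ Σ_{k=1}^K u_k p_k + Σ_{k=1}^K ∫_{1−p_k}^1 F_k^{-1}(t) dt ]. Then there exists a Borel probability measure Q on ℝ^K that belongs to the marginal ambiguity set B induced by F_1,…,F_K, attains the supremum defining Φ(u;B), and satisfies Q{z ∈ ℝ^K : u_k + z_k > u_ℓ + z_ℓ for all ℓ ≠ k} = p_k(u) for every k ∈ [K]. -/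

import Mathlib

open MeasureTheory Set Filter

noncomputable def simplex (K : ℕ) : Set (Fin K → ℝ) :=
  {p | (∀ k, 0 ≤ p k) ∧ ∑ k, p k = 1}

noncomputable def quantile (F : ℝ → ℝ) (s : ℝ) : ℝ := sInf {t | s ≤ F t}

noncomputable def dopaObj {K : ℕ} (F : Fin K → ℝ → ℝ) (u p : Fin K → ℝ) : ℝ :=
  ∑ k, u k * p k + ∑ k, ∫ t in (1 - p k)..1, quantile (F k) t

def marginalSet {K : ℕ} (F : Fin K → ℝ → ℝ) : Set (Measure (Fin K → ℝ)) :=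
  {Q | IsProbabilityMeasure Q ∧ ∀ k s, Q {z | z k ≤ s} = ENNReal.ofReal (F k s)}

namespace P2

variable {F : ℝ → ℝ}

lemma quantile_eq_of (hm : StrictMono F) {t x : ℝ} (hx : F x = t) : quantile F t = x := by
  have : {y | t ≤ F y} = Ici x := by
    ext y
    simp only [mem_setOf_eq, mem_Ici, ← hx, hm.le_iff_le]
  rw [quantile, this, csInf_Ici]
lemma exists_F_eq (hm : StrictMono F) (hc : Continuous F)
    (hb : Tendsto F atBot (nhds 0)) (ht : Tendsto F atTop (nhds 1))
    {t : ℝ} (h : t ∈ Ioo (0:ℝ) 1) : ∃ x, F x = t := by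
  obtain ⟨a, ha⟩ : ∃ a, F a < t := by
    have := hb.eventually (eventually_lt_nhds h.1)
    exact (this.exists)
  obtain ⟨b, hbt⟩ : ∃ b, t < F b := by
    have := ht.eventually (eventually_gt_nhds h.2)
    exact (this.exists)
  have hab : a ≤ b := le_of_lt (hm.lt_iff_lt.mp (ha.trans hbt))
  obtain ⟨x, _, hx⟩ := intermediate_value_Icc hab hc.continuousOn
    ⟨le_of_lt ha, le_of_lt hbt⟩
  exact ⟨x, hx⟩
lemma F_quantile (hm : StrictMono F) (hc : Continuous F)
    (hb : Tendsto F atBot (nhds 0)) (ht : Tendsto F atTop (nhds 1))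
    {t : ℝ} (h : t ∈ Ioo (0:ℝ) 1) : F (quantile F t) = t := by
  obtain ⟨x, hx⟩ := exists_F_eq hm hc hb ht h
  rw [quantile_eq_of hm hx, hx]
lemma quantile_le_iff (hm : StrictMono F) (hc : Continuous F)
    (hb : Tendsto F atBot (nhds 0)) (ht : Tendsto F atTop (nhds 1))
    {t s : ℝ} (h : t ∈ Ioo (0:ℝ) 1) : quantile F t ≤ s ↔ t ≤ F s := by
  obtain ⟨x, hx⟩ := exists_F_eq hm hc hb ht h
  rw [quantile_eq_of hm hx, ← hx, hm.le_iff_le]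
lemma quantile_strictMonoOn (hm : StrictMono F) (hc : Continuous F)
    (hb : Tendsto F atBot (nhds 0)) (ht : Tendsto F atTop (nhds 1)) :
    StrictMonoOn (quantile F) (Ioo (0:ℝ) 1) := by
  intro s hs t htm hst
  have h1 := F_quantile hm hc hb ht hs
  have h2 := F_quantile hm hc hb ht htm
  by_contra hle
  push_neg at hle
  have := hm.monotone hle
  rw [h1, h2] at this
  exact absurd hst (not_lt.mpr this)

lemma quantile_monotoneOn (hm : StrictMono F) (hc : Continuous F)
    (hb : Tendsto F atBot (nhds 0)) (ht : Tendsto F atTop (nhds 1)) :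
    MonotoneOn (quantile F) (Ioo (0:ℝ) 1) :=
  (quantile_strictMonoOn hm hc hb ht).monotoneOn

lemma quantile_ge (hm : StrictMono F) (hc : Continuous F)
    (hb : Tendsto F atBot (nhds 0)) (ht : Tendsto F atTop (nhds 1))
    {M t : ℝ} (h1 : t ∈ Ioo (0:ℝ) 1) (h2 : F M < t) : M ≤ quantile F t := by
  have := F_quantile hm hc hb ht h1
  by_contra hcon
  push_neg at hcon
  have := hm hcon
  rw [F_quantile hm hc hb ht h1] at this
  linarith

lemma quantile_continuousAt (hm : StrictMono F) (hc : Continuous F) (h01 : ∀ s, F s ∈ Ioo (0:ℝ) 1)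
    (hb : Tendsto F atBot (nhds 0)) (ht : Tendsto F atTop (nhds 1))
    {t : ℝ} (h : t ∈ Ioo (0:ℝ) 1) : ContinuousAt (quantile F) t := by
  rw [Metric.continuousAt_iff]
  intro δ hδ
  set x := quantile F t with hxdef
  have hFx : F x = t := F_quantile hm hc hb ht h
  have ha : F (x - δ) < t := by rw [← hFx]; exact hm (by linarith)
  have hbb : t < F (x + δ) := by rw [← hFx]; exact hm (by linarith)
  refine ⟨min (t - F (x - δ)) (F (x + δ) - t), lt_min (by linarith) (by linarith), fun {s} hd => ?_⟩
  rw [Real.dist_eq] at hd ⊢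
  have h1 : F (x - δ) < s := by
    have := abs_lt.mp hd
    have := min_le_left (t - F (x - δ)) (F (x + δ) - t)
    linarith [this]
  have h2 : s < F (x + δ) := by
    have := abs_lt.mp hd
    have := min_le_right (t - F (x - δ)) (F (x + δ) - t)
    linarith [this]
  have hs01 : s ∈ Ioo (0:ℝ) 1 := ⟨(h01 (x - δ)).1.trans h1, h2.trans (h01 (x + δ)).2⟩
  have hFs : F (quantile F s) = s := F_quantile hm hc hb ht hs01
  have hup : quantile F s < x + δ := by
    by_contra hcon
    push_neg at hcon
    have := hm.monotone hcon
    rw [hFs] at this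
    linarith
  have hdown : x - δ < quantile F s := by
    by_contra hcon
    push_neg at hcon
    have := hm.monotone hcon
    rw [hFs] at this
    linarith
  rw [abs_sub_lt_iff]
  constructor <;> linarith

lemma quantile_continuousOn (hm : StrictMono F) (hc : Continuous F) (h01 : ∀ s, F s ∈ Ioo (0:ℝ) 1)
    (hb : Tendsto F atBot (nhds 0)) (ht : Tendsto F atTop (nhds 1)) :
    ContinuousOn (quantile F) (Ioo (0:ℝ) 1) := fun t htm =>
  (quantile_continuousAt hm hc h01 hb ht htm).continuousWithinAt

/-- uniform probability measure on `Ioo a b` -/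
noncomputable def unif (a b : ℝ) : Measure ℝ :=
  (ENNReal.ofReal (b - a))⁻¹ • (volume.restrict (Ioo a b))

lemma isProb_unif {a b : ℝ} (h : a < b) : IsProbabilityMeasure (unif a b) := by
  constructor
  rw [unif, Measure.smul_apply, Measure.restrict_apply MeasurableSet.univ, univ_inter,
    Real.volume_Ioo, smul_eq_mul, ENNReal.inv_mul_cancel]
  · simp [ENNReal.ofReal_eq_zero]; linarith
  · exact ENNReal.ofReal_ne_top

lemma aemeasurable_quantile_unif (hm : StrictMono F) (hc : Continuous F) (h01 : ∀ s, F s ∈ Ioo (0:ℝ) 1)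
    (hb : Tendsto F atBot (nhds 0)) (ht : Tendsto F atTop (nhds 1))
    {a b : ℝ} (ha : 0 ≤ a) (hblt : b ≤ 1) :
    AEMeasurable (quantile F) (unif a b) := by
  have h1 : AEMeasurable (quantile F) (volume.restrict (Ioo a b)) := by
    have h2 : AEMeasurable (quantile F) (volume.restrict (Ioo (0:ℝ) 1)) :=
      (quantile_continuousOn hm hc h01 hb ht).aemeasurable measurableSet_Ioo
    exact h2.mono_measure (Measure.restrict_mono (Ioo_subset_Ioo ha hblt) le_rfl)
  rw [unif]
  exact h1.smul_measure _

lemma map_quantile_Iic (hm : StrictMono F) (hc : Continuous F) (h01 : ∀ s, F s ∈ Ioo (0:ℝ) 1)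
    (hb : Tendsto F atBot (nhds 0)) (ht : Tendsto F atTop (nhds 1))
    {a b : ℝ} (ha : 0 ≤ a) (hab : a < b) (hblt : b ≤ 1) (s : ℝ) :
    (Measure.map (quantile F) (unif a b)) (Iic s) =
      ENNReal.ofReal ((min (F s) b - a) / (b - a)) := by
  rw [Measure.map_apply_of_aemeasurable (aemeasurable_quantile_unif hm hc h01 hb ht ha hblt)
    measurableSet_Iic, unif, Measure.smul_apply,
    Measure.restrict_apply' measurableSet_Ioo]
  have hset : quantile F ⁻¹' Iic s ∩ Ioo a b = Ioo a b ∩ Iic (F s) := by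
    ext t
    simp only [mem_inter_iff, mem_preimage, mem_Iic, mem_Ioo]
    constructor
    · rintro ⟨hq, h1, h2⟩
      have ht01 : t ∈ Ioo (0:ℝ) 1 := ⟨lt_of_le_of_lt ha h1, lt_of_lt_of_le h2 hblt⟩
      exact ⟨⟨h1, h2⟩, (quantile_le_iff hm hc hb ht ht01).mp hq⟩
    · rintro ⟨⟨h1, h2⟩, h3⟩
      have ht01 : t ∈ Ioo (0:ℝ) 1 := ⟨lt_of_le_of_lt ha h1, lt_of_lt_of_le h2 hblt⟩
      exact ⟨(quantile_le_iff hm hc hb ht ht01).mpr h3, h1, h2⟩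
  have hvol : volume (Ioo a b ∩ Iic (F s)) = ENNReal.ofReal (min (F s) b - a) := by
    rcases le_or_gt b (F s) with hcase | hcase
    · have : Ioo a b ∩ Iic (F s) = Ioo a b := by
        apply inter_eq_left.mpr
        intro t htm
        exact le_trans (le_of_lt htm.2) hcase
      rw [this, Real.volume_Ioo, min_eq_right hcase]
    · have : Ioo a b ∩ Iic (F s) = Ioc a (F s) := by
        ext t
        simp only [mem_inter_iff, mem_Ioo, mem_Iic, mem_Ioc]
        exact ⟨fun ⟨⟨h1, _⟩, h3⟩ => ⟨h1, h3⟩, fun ⟨h1, h3⟩ => ⟨⟨h1, lt_of_le_of_lt h3 hcase⟩, h3⟩⟩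
      rw [this, Real.volume_Ioc, min_eq_left (le_of_lt hcase)]
  rw [hset, hvol, smul_eq_mul]
  symm
  rw [div_eq_inv_mul, ENNReal.ofReal_mul (inv_nonneg.mpr (by linarith)), ENNReal.ofReal_inv_of_pos (by linarith)]

lemma integrable_quantile_unif (hint : IntegrableOn (quantile F) (Ioo (0:ℝ) 1))
    {a b : ℝ} (ha : 0 ≤ a) (hab : a < b) (hblt : b ≤ 1) :
    Integrable (quantile F) (unif a b) := by
  rw [unif]
  refine (integrable_smul_measure ?_ ?_).mpr (hint.mono_set (Ioo_subset_Ioo ha hblt))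
  · simp
  · rw [Ne, ENNReal.inv_eq_top, ENNReal.ofReal_eq_zero]
    push_neg
    linarith

lemma integrable_id_map_quantile (hm : StrictMono F) (hc : Continuous F) (h01 : ∀ s, F s ∈ Ioo (0:ℝ) 1)
    (hb : Tendsto F atBot (nhds 0)) (ht : Tendsto F atTop (nhds 1))
    (hint : IntegrableOn (quantile F) (Ioo (0:ℝ) 1))
    {a b : ℝ} (ha : 0 ≤ a) (hblt : b ≤ 1) (hab : a < b) :
    Integrable (fun x => x) (Measure.map (quantile F) (unif a b)) := by
  rw [show (fun x : ℝ => x) = id from rfl,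
    integrable_map_measure aestronglyMeasurable_id
    (aemeasurable_quantile_unif hm hc h01 hb ht ha hblt)]
  exact integrable_quantile_unif hint ha hab hblt

lemma pi_map_eval {K : ℕ} (ν : Fin K → Measure ℝ) [hν : ∀ l, IsProbabilityMeasure (ν l)] (l : Fin K) :
    (Measure.pi ν).map (Function.eval l) = ν l := by
  ext s hs
  rw [Measure.map_apply (measurable_pi_apply l) hs]
  have : Function.eval l ⁻¹' s = Set.pi univ (Function.update (fun _ => (univ : Set ℝ)) l s) := by
    ext z
    simp only [mem_preimage, Set.mem_pi, mem_univ, forall_true_left, Function.eval]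
    constructor
    · intro h j
      by_cases hj : j = l
      · subst hj; simp [Function.update, h]
      · simp [Function.update, hj]
    · intro h
      have := h l
      simpa [Function.update] using this
  rw [this, Measure.pi_pi]
  have : ∀ j, ν j (Function.update (fun _ => (univ : Set ℝ)) l s j) =
      if j = l then ν l s else 1 := by
    intro j
    by_cases hj : j = l
    · subst hj; simp [Function.update]
    · simp [Function.update, hj, measure_univ]
  rw [Finset.prod_congr rfl (fun j _ => this j)]
  simp

lemma sum_comp_update {K : ℕ} (h : Fin K → ℝ → ℝ) (w : Fin K → ℝ) (i : Fin K) (a : ℝ) :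
    ∑ j, h j (Function.update w i a j) = (∑ j, h j (w j)) - h i (w i) + h i a := by
  have key : (fun j => h j (Function.update w i a j)) =
      Function.update (fun j => h j (w j)) i (h i a) := by
    funext j
    by_cases hj : j = i
    · subst hj; simp [Function.update]
    · simp [Function.update, hj]
  rw [key, Finset.sum_update_of_mem (Finset.mem_univ i), Finset.sdiff_singleton_eq_erase,
    Finset.sum_erase_eq_sub (Finset.mem_univ i)]
  ring

lemma integrableOn_Ioc_quantile (hint : IntegrableOn (quantile F) (Ioo (0:ℝ) 1))
    {a : ℝ} (ha : 0 ≤ a) : IntegrableOn (quantile F) (Ioc a 1) := by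
  have h1 : IntegrableOn (quantile F) (Ioo a 1) := hint.mono_set (Ioo_subset_Ioo ha le_rfl)
  rcases lt_or_ge a 1 with h | h
  · rw [IntegrableOn, Measure.restrict_congr_set (Ioo_ae_eq_Ioc)] at h1
    exact h1
  · rw [IntegrableOn, Ioc_eq_empty (by linarith), Measure.restrict_empty]
    exact integrable_zero_measure

lemma integral_Ioc_split {a b : ℝ} (hab : a ≤ b) (hb1 : b ≤ 1) (ha : 0 ≤ a)
    (hint : IntegrableOn (quantile F) (Ioo (0:ℝ) 1)) :
    ∫ t in Ioc a 1, quantile F t = (∫ t in Ioc a b, quantile F t) + ∫ t in Ioc b 1, quantile F t := by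
  have h1 : IntegrableOn (quantile F) (Ioc a b) :=
    (integrableOn_Ioc_quantile hint ha).mono_set (Ioc_subset_Ioc le_rfl hb1)
  have h2 : IntegrableOn (quantile F) (Ioc b 1) :=
    integrableOn_Ioc_quantile hint (le_trans ha hab)
  rw [← setIntegral_union (Ioc_disjoint_Ioc_of_le le_rfl) measurableSet_Ioc h1 h2, Ioc_union_Ioc_eq_Ioc hab hb1]

lemma const_integral_Ioo {a b c : ℝ} (hab : a ≤ b) :
    ∫ _ in Ioo a b, c = (b - a) * c := by
  rw [setIntegral_const, Real.volume_real_Ioo_of_le hab, smul_eq_mul]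

lemma integral_Ioc_ge_mul (hm : StrictMono F) (hc : Continuous F)
    (hb : Tendsto F atBot (nhds 0)) (ht : Tendsto F atTop (nhds 1))
    (hint : IntegrableOn (quantile F) (Ioo (0:ℝ) 1))
    {a b : ℝ} (ha : 0 < a) (hab : a < b) (hb1 : b ≤ 1) :
    (b - a) * quantile F a ≤ ∫ t in Ioc a b, quantile F t := by
  rw [integral_Ioc_eq_integral_Ioo, ← const_integral_Ioo (c := quantile F a) (le_of_lt hab)]
  apply setIntegral_mono_on
  · exact integrableOn_const (by rw [Real.volume_Ioo]; exact ENNReal.ofReal_ne_top)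
  · exact hint.mono_set (fun t htm => ⟨lt_trans ha htm.1, lt_of_lt_of_le htm.2 hb1⟩)
  · exact measurableSet_Ioo
  · intro t htm
    exact quantile_monotoneOn hm hc hb ht ⟨ha, lt_of_lt_of_le hab hb1⟩
      ⟨lt_trans ha htm.1, lt_of_lt_of_le htm.2 hb1⟩ (le_of_lt htm.1)

lemma integral_Ioc_le_mul (hm : StrictMono F) (hc : Continuous F)
    (hb : Tendsto F atBot (nhds 0)) (ht : Tendsto F atTop (nhds 1))
    (hint : IntegrableOn (quantile F) (Ioo (0:ℝ) 1))
    {a b : ℝ} (ha : 0 ≤ a) (hab : a < b) (hb1 : b < 1) :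
    ∫ t in Ioc a b, quantile F t ≤ (b - a) * quantile F b := by
  rw [integral_Ioc_eq_integral_Ioo, ← const_integral_Ioo (c := quantile F b) (le_of_lt hab)]
  apply setIntegral_mono_on
  · exact hint.mono_set (fun t htm => ⟨lt_of_le_of_lt ha htm.1, lt_trans htm.2 hb1⟩)
  · exact integrableOn_const (by rw [Real.volume_Ioo]; exact ENNReal.ofReal_ne_top)
  · exact measurableSet_Ioo
  · intro t htm
    exact quantile_monotoneOn hm hc hb ht ⟨lt_of_le_of_lt ha htm.1, lt_trans htm.2 hb1⟩
      ⟨lt_of_le_of_lt ha hab, hb1⟩ (le_of_lt htm.2)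

lemma p_le_one {K : ℕ} {p : Fin K → ℝ} (hp : (∀ k, 0 ≤ p k) ∧ ∑ k, p k = 1) (k : Fin K) :
    p k ≤ 1 := by
  rw [← hp.2]
  exact Finset.single_le_sum (fun j _ => hp.1 j) (Finset.mem_univ k)

section Main

variable {K : ℕ} {F : Fin K → ℝ → ℝ} {u p : Fin K → ℝ}
variable (hmono : ∀ k, StrictMono (F k)) (hcont : ∀ k, Continuous (F k))
  (h01 : ∀ k s, F k s ∈ Ioo (0:ℝ) 1)
  (hbot : ∀ k, Tendsto (F k) atBot (nhds 0)) (htop : ∀ k, Tendsto (F k) atTop (nhds 1))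
  (hint : ∀ k, IntegrableOn (quantile (F k)) (Ioo (0:ℝ) 1))

lemma dopa_eq_sum (w : Fin K → ℝ) :
    dopaObj F u w = ∑ j, (u j * w j + ∫ t in (1 - w j)..1, quantile (F j) t) := by
  rw [dopaObj, Finset.sum_add_distrib]

include hint in
lemma key_ineq (hp : p ∈ simplex K) (hmax : IsMaxOn (dopaObj F u) (simplex K) p)
    {k l : Fin K} (hkl : k ≠ l) {ε : ℝ} (hε : 0 < ε) (hεk : ε ≤ p k) (hεl : ε ≤ 1 - p l) :
    u l * ε + ∫ t in Ioc (1 - p l - ε) (1 - p l), quantile (F l) t ≤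
      u k * ε + ∫ t in Ioc (1 - p k) (1 - p k + ε), quantile (F k) t := by
  obtain ⟨hp0, hp1⟩ := hp
  have hpk1 : p k ≤ 1 := p_le_one ⟨hp0, hp1⟩ k
  have hpl1 : p l ≤ 1 := p_le_one ⟨hp0, hp1⟩ l
  set p' : Fin K → ℝ := Function.update (Function.update p k (p k - ε)) l (p l + ε) with hp'
  have hp'k : p' k = p k - ε := by
    rw [hp', Function.update_of_ne hkl, Function.update_self]
  have hp'simplex : p' ∈ simplex K := by
    constructor
    · intro j
      by_cases hj : j = l
      · subst hj
        rw [hp', Function.update_self]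
        linarith [hp0 j]
      · by_cases hj2 : j = k
        · subst hj2
          rw [hp'k]; linarith
        · rw [hp', Function.update_of_ne hj, Function.update_of_ne hj2]
          exact hp0 j
    · have e1 : ∑ j, p' j = (∑ j, Function.update p k (p k - ε) j)
          - Function.update p k (p k - ε) l + (p l + ε) := by
        have := sum_comp_update (fun _ y => y) (Function.update p k (p k - ε)) l (p l + ε)
        simpa using this
      have e2 : ∑ j, Function.update p k (p k - ε) j = (∑ j, p j) - p k + (p k - ε) := by
        have := sum_comp_update (fun _ y => y) p k (p k - ε)
        simpa using this
      rw [e1, e2, Function.update_of_ne (Ne.symm hkl), hp1]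
      ring
  have hI : dopaObj F u p' ≤ dopaObj F u p := hmax hp'simplex
  set h : Fin K → ℝ → ℝ := fun j y => u j * y + ∫ t in (1 - y)..1, quantile (F j) t with hh
  have hsum' : dopaObj F u p' = (dopaObj F u p) - h k (p k) + h k (p k - ε) - h l (p l) + h l (p l + ε) := by
    rw [dopa_eq_sum p', dopa_eq_sum p, hp']
    rw [show (∑ j, (u j * Function.update (Function.update p k (p k - ε)) l (p l + ε) j +
        ∫ t in (1 - Function.update (Function.update p k (p k - ε)) l (p l + ε) j)..1, quantile (F j) t)) =
      ∑ j, h j (Function.update (Function.update p k (p k - ε)) l (p l + ε) j) from rfl]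
    rw [sum_comp_update h (Function.update p k (p k - ε)) l (p l + ε),
      sum_comp_update h p k (p k - ε), Function.update_of_ne (Ne.symm hkl)]
  have hineq : h k (p k - ε) + h l (p l + ε) ≤ h k (p k) + h l (p l) := by linarith
  -- now unfold h and convert interval integrals
  have conv : ∀ (j : Fin K) (y : ℝ), 0 ≤ y → (∫ t in (1 - y)..1, quantile (F j) t)
      = ∫ t in Ioc (1 - y) 1, quantile (F j) t := by
    intro j y hy
    rw [intervalIntegral.integral_of_le (by linarith)]
  have hsk := integral_Ioc_split (a := 1 - p k) (b := 1 - p k + ε) (by linarith) (by linarith)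
    (by linarith [hp0 k]) (hint k)
  have hsl := integral_Ioc_split (a := 1 - p l - ε) (b := 1 - p l) (by linarith) (by linarith [hp0 l])
    (by linarith) (hint l)
  rw [hh] at hineq
  simp only [] at hineq
  rw [conv k (p k - ε) (by linarith), conv k (p k) (by linarith [hp0 k]),
    conv l (p l + ε) (by linarith [hp0 l]), conv l (p l) (by linarith [hp0 l])] at hineq
  have e3 : (1 : ℝ) - (p k - ε) = 1 - p k + ε := by ring
  have e4 : (1 : ℝ) - (p l + ε) = 1 - p l - ε := by ring
  rw [e3, e4] at hineq
  rw [hsl] at hineq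
  have hsk' : ∫ t in Ioc (1 - p k + ε) 1, quantile (F k) t
      = (∫ t in Ioc (1 - p k) 1, quantile (F k) t) - ∫ t in Ioc (1 - p k) (1 - p k + ε), quantile (F k) t := by
    rw [hsk]; ring
  rw [hsk'] at hineq
  linarith

include hmono hcont h01 hbot htop hint in
lemma p_pos (hp : p ∈ simplex K) (hmax : IsMaxOn (dopaObj F u) (simplex K) p)
    (k : Fin K) : 0 < p k := by
  obtain ⟨hp0, hp1⟩ := hp
  by_contra hcon
  push_neg at hcon
  have hpk0 : p k = 0 := le_antisymm hcon (hp0 k)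
  obtain ⟨l, hl⟩ : ∃ l, 0 < p l := by
    by_contra hall
    push_neg at hall
    have : ∑ j, p j ≤ 0 := Finset.sum_nonpos (fun j _ => hall j)
    linarith
  have hkl : l ≠ k := by
    intro h; rw [h, hpk0] at hl; exact lt_irrefl 0 hl
  set M : ℝ := u l - u k + quantile (F l) (1 - p l / 2) + 1 with hM
  have hFkM : F k M ∈ Ioo (0:ℝ) 1 := h01 k M
  set ε : ℝ := min (p l / 2) ((1 - F k M) / 2) with hε
  have hεpos : 0 < ε := lt_min (by linarith) (by linarith [hFkM.2])
  have hεl : ε ≤ p l / 2 := min_le_left _ _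
  have hεM : ε ≤ (1 - F k M) / 2 := min_le_right _ _
  have hεhalf : ε < 1 := by
    have := hFkM.1
    calc ε ≤ (1 - F k M) / 2 := hεM
    _ < 1 := by linarith
  have hkey := key_ineq hint ⟨hp0, hp1⟩ hmax hkl hεpos (by linarith) (by rw [hpk0]; linarith)
  rw [hpk0] at hkey
  -- hkey : u k * ε + ∫ Ioc (1 - 0 - ε) (1 - 0) qk ≤ u l * ε + ∫ Ioc (1 - p l) (1 - p l + ε) ql
  have e1 : (1 : ℝ) - 0 - ε = 1 - ε := by ring
  have e2 : (1 : ℝ) - 0 = 1 := by ring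
  rw [e1, e2] at hkey
  have hlow : (1 - (1 - ε)) * quantile (F k) (1 - ε) ≤ ∫ t in Ioc (1 - ε) 1, quantile (F k) t :=
    integral_Ioc_ge_mul (hmono k) (hcont k) (hbot k) (htop k) (hint k)
      (by linarith) (by linarith) le_rfl
  have hqkM : M ≤ quantile (F k) (1 - ε) := by
    apply quantile_ge (hmono k) (hcont k) (hbot k) (htop k) ⟨by linarith, by linarith⟩
    have : ε < 1 - F k M := by linarith [hFkM.1]
    linarith
  have hpl1 : p l ≤ 1 := p_le_one ⟨hp0, hp1⟩ l
  have hup : ∫ t in Ioc (1 - p l) (1 - p l + ε), quantile (F l) t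
      ≤ (1 - p l + ε - (1 - p l)) * quantile (F l) (1 - p l + ε) :=
    integral_Ioc_le_mul (hmono l) (hcont l) (hbot l) (htop l) (hint l)
      (by linarith) (by linarith) (by linarith [hεl])
  have hmono' : quantile (F l) (1 - p l + ε) ≤ quantile (F l) (1 - p l / 2) := by
    apply quantile_monotoneOn (hmono l) (hcont l) (hbot l) (htop l)
      ⟨by linarith, by linarith [hεl]⟩ ⟨by linarith, by linarith⟩
    linarith [hεl]
  have h1 : (1 - (1 - ε)) * quantile (F k) (1 - ε) = ε * quantile (F k) (1 - ε) := by ring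
  have h2 : (1 - p l + ε - (1 - p l)) * quantile (F l) (1 - p l + ε)
      = ε * quantile (F l) (1 - p l + ε) := by ring
  rw [h1] at hlow
  rw [h2] at hup
  have hfinal : u k * ε + ε * M ≤ u l * ε + ε * quantile (F l) (1 - p l / 2) := by
    calc u k * ε + ε * M ≤ u k * ε + ε * quantile (F k) (1 - ε) := by nlinarith
    _ ≤ u k * ε + ∫ t in Ioc (1 - ε) 1, quantile (F k) t := by linarith
    _ ≤ u l * ε + ∫ t in Ioc (1 - p l) (1 - p l + ε), quantile (F l) t := hkey
    _ ≤ u l * ε + ε * quantile (F l) (1 - p l + ε) := by linarith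
    _ ≤ u l * ε + ε * quantile (F l) (1 - p l / 2) := by nlinarith
  rw [hM] at hfinal
  nlinarith

include hmono hcont h01 hbot htop hint in
lemma kkt_le (hp : p ∈ simplex K) (hmax : IsMaxOn (dopaObj F u) (simplex K) p)
    (hpos : ∀ j, 0 < p j) (hlt1 : ∀ j, p j < 1) {k l : Fin K} (hkl : k ≠ l) :
    u l + quantile (F l) (1 - p l) ≤ u k + quantile (F k) (1 - p k) := by
  obtain ⟨hp0, hp1⟩ := hp
  set ε₀ : ℝ := min (p k) (1 - p l) with hε₀
  have hε₀pos : 0 < ε₀ := lt_min (hpos k) (by linarith [hlt1 l])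
  have hstep : ∀ ε ∈ Ioo (0:ℝ) ε₀,
      u l + quantile (F l) (1 - p l - ε) ≤ u k + quantile (F k) (1 - p k + ε) := by
    intro ε hεm
    obtain ⟨hε1, hε2⟩ := hεm
    have hεk : ε < p k := lt_of_lt_of_le hε2 (min_le_left _ _)
    have hεl : ε < 1 - p l := lt_of_lt_of_le hε2 (min_le_right _ _)
    have hkey := key_ineq hint ⟨hp0, hp1⟩ hmax hkl hε1 (le_of_lt hεk) (le_of_lt hεl)
    have hlow : (1 - p l - (1 - p l - ε)) * quantile (F l) (1 - p l - ε)
        ≤ ∫ t in Ioc (1 - p l - ε) (1 - p l), quantile (F l) t :=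
      integral_Ioc_ge_mul (hmono l) (hcont l) (hbot l) (htop l) (hint l)
        (by linarith) (by linarith) (by linarith [hpos l])
    have hup : ∫ t in Ioc (1 - p k) (1 - p k + ε), quantile (F k) t
        ≤ (1 - p k + ε - (1 - p k)) * quantile (F k) (1 - p k + ε) :=
      integral_Ioc_le_mul (hmono k) (hcont k) (hbot k) (htop k) (hint k)
        (by linarith [hlt1 k]) (by linarith) (by linarith)
    have hεmul : ε * (u l + quantile (F l) (1 - p l - ε)) ≤ ε * (u k + quantile (F k) (1 - p k + ε)) := by
      nlinarith
    exact le_of_mul_le_mul_left hεmul hε1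
  -- take the limit ε → 0⁺
  have hck : ContinuousAt (quantile (F k)) (1 - p k) :=
    quantile_continuousAt (hmono k) (hcont k) (h01 k) (hbot k) (htop k)
      ⟨by linarith [hlt1 k], by linarith [hpos k]⟩
  have hcl : ContinuousAt (quantile (F l)) (1 - p l) :=
    quantile_continuousAt (hmono l) (hcont l) (h01 l) (hbot l) (htop l)
      ⟨by linarith [hlt1 l], by linarith [hpos l]⟩
  have htk : Tendsto (fun ε : ℝ => u k + quantile (F k) (1 - p k + ε) -
      (u l + quantile (F l) (1 - p l - ε))) (nhdsWithin 0 (Ioi 0))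
      (nhds (u k + quantile (F k) (1 - p k) - (u l + quantile (F l) (1 - p l)))) := by
    have t1 : Tendsto (fun ε : ℝ => 1 - p k + ε) (nhds 0) (nhds (1 - p k)) := by
      have hcn : Continuous (fun ε : ℝ => 1 - p k + ε) := by continuity
      simpa using hcn.tendsto 0
    have t2 : Tendsto (fun ε : ℝ => 1 - p l - ε) (nhds 0) (nhds (1 - p l)) := by
      have hcn : Continuous (fun ε : ℝ => 1 - p l - ε) := by continuity
      simpa using hcn.tendsto 0
    have c1 : Tendsto (fun ε : ℝ => quantile (F k) (1 - p k + ε)) (nhds 0)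
        (nhds (quantile (F k) (1 - p k))) := by
      exact Filter.Tendsto.comp (f := fun ε : ℝ => 1 - p k + ε) hck.tendsto t1
    have c2 : Tendsto (fun ε : ℝ => quantile (F l) (1 - p l - ε)) (nhds 0)
        (nhds (quantile (F l) (1 - p l))) := by
      exact Filter.Tendsto.comp (f := fun ε : ℝ => 1 - p l - ε) hcl.tendsto t2
    exact ((tendsto_const_nhds.add c1).sub (tendsto_const_nhds.add c2)).mono_left
      nhdsWithin_le_nhds
  have hev : ∀ᶠ ε in nhdsWithin (0:ℝ) (Ioi 0), 0 ≤ u k + quantile (F k) (1 - p k + ε) -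
      (u l + quantile (F l) (1 - p l - ε)) := by
    filter_upwards [Ioo_mem_nhdsGT_of_mem (show (0:ℝ) ∈ Ico 0 ε₀ from ⟨le_refl 0, hε₀pos⟩)]
      with ε hεm
    linarith [hstep ε hεm]
  have := ge_of_tendsto htk hev
  linarith

end Main

end P2

open P2 in
theorem stmt5 (K : ℕ) (hK : 2 ≤ K) (F : Fin K → ℝ → ℝ)
    (hmono : ∀ k, StrictMono (F k))
    (hcont : ∀ k, Continuous (F k))
    (h01 : ∀ k s, F k s ∈ Ioo (0:ℝ) 1)
    (hbot : ∀ k, Tendsto (F k) atBot (nhds 0))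
    (htop : ∀ k, Tendsto (F k) atTop (nhds 1))
    (hint : ∀ k, IntegrableOn (quantile (F k)) (Ioo (0:ℝ) 1))
    (u p : Fin K → ℝ) (hp : p ∈ simplex K)
    (hmax : IsMaxOn (dopaObj F u) (simplex K) p)
    (huniq : ∀ q ∈ simplex K, IsMaxOn (dopaObj F u) (simplex K) q → q = p) :
    ∃ Q : Measure (Fin K → ℝ), Q ∈ marginalSet F ∧
      Integrable (fun z => ⨆ k, u k + z k) Q ∧
      (∀ Q' ∈ marginalSet F, Integrable (fun z => ⨆ k, u k + z k) Q' →
        ∫ z, (⨆ k, u k + z k) ∂Q' ≤ ∫ z, (⨆ k, u k + z k) ∂Q) ∧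
      ∀ k, Q {z | ∀ l, l ≠ k → u l + z l < u k + z k} = ENNReal.ofReal (p k) := by
  haveI hFinNE : Nonempty (Fin K) := ⟨⟨0, by omega⟩⟩
  obtain ⟨hp0, hp1⟩ := hp
  have hpos : ∀ k, 0 < p k :=
    p_pos hmono hcont h01 hbot htop hint ⟨hp0, hp1⟩ hmax
  have hlt1 : ∀ k, p k < 1 := by
    intro k
    obtain ⟨j, hj⟩ : ∃ j : Fin K, j ≠ k := by
      haveI : Nontrivial (Fin K) := Fin.nontrivial_iff_two_le.mpr hK
      exact exists_ne k
    have hjmem : j ∈ Finset.univ.erase k := Finset.mem_erase.mpr ⟨hj, Finset.mem_univ j⟩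
    have h1 : p j ≤ ∑ i ∈ Finset.univ.erase k, p i :=
      Finset.single_le_sum (fun i _ => hp0 i) hjmem
    have h2 : ∑ i ∈ Finset.univ.erase k, p i + p k = 1 := by
      rw [Finset.sum_erase_add _ _ (Finset.mem_univ k)]; exact hp1
    linarith [hpos j]
  set x : Fin K → ℝ := fun k => quantile (F k) (1 - p k) with hx
  set lam : ℝ := u ⟨0, by omega⟩ + x ⟨0, by omega⟩ with hlamdef
  have hlam : ∀ k, u k + x k = lam := by
    intro k
    by_cases hk : k = ⟨0, by omega⟩
    · rw [hk]
    · exact le_antisymm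
        (kkt_le hmono hcont h01 hbot htop hint ⟨hp0, hp1⟩ hmax hpos hlt1 (Ne.symm hk))
        (kkt_le hmono hcont h01 hbot htop hint ⟨hp0, hp1⟩ hmax hpos hlt1 hk)
  have hFx : ∀ k, F k (x k) = 1 - p k := fun k =>
    F_quantile (hmono k) (hcont k) (hbot k) (htop k) ⟨by linarith [hlt1 k], by linarith [hpos k]⟩
  -- the measures
  set aa : Fin K → Fin K → ℝ := fun k l => if l = k then 1 - p l else 0 with haa
  set bb : Fin K → Fin K → ℝ := fun k l => if l = k then 1 else 1 - p l with hbb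
  have haa0 : ∀ k l, 0 ≤ aa k l := by
    intro k l
    by_cases h : l = k <;> simp [haa, h] <;> linarith [hlt1 l, hlt1 k]
  have hab : ∀ k l, aa k l < bb k l := by
    intro k l
    by_cases h : l = k <;> simp [haa, hbb, h] <;> linarith [hpos l, hpos k, hlt1 l, hlt1 k]
  have hbb1 : ∀ k l, bb k l ≤ 1 := by
    intro k l
    by_cases h : l = k <;> simp [hbb, h] <;> linarith [hpos l, hpos k]
  set ν : Fin K → Fin K → Measure ℝ :=
    fun k l => Measure.map (quantile (F l)) (unif (aa k l) (bb k l)) with hν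
  haveI hunifprob : ∀ k l, IsProbabilityMeasure (unif (aa k l) (bb k l)) :=
    fun k l => isProb_unif (hab k l)
  have hνae : ∀ k l, AEMeasurable (quantile (F l)) (unif (aa k l) (bb k l)) := fun k l =>
    aemeasurable_quantile_unif (hmono l) (hcont l) (h01 l) (hbot l) (htop l)
      (haa0 k l) (hbb1 k l)
  haveI hνprob : ∀ k l, IsProbabilityMeasure (ν k l) := fun k l =>
    Measure.isProbabilityMeasure_map (hνae k l)
  have hνIic : ∀ k l s, ν k l (Iic s) =
      ENNReal.ofReal ((min (F l s) (bb k l) - aa k l) / (bb k l - aa k l)) := fun k l s =>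
    map_quantile_Iic (hmono l) (hcont l) (h01 l) (hbot l) (htop l)
      (haa0 k l) (hab k l) (hbb1 k l) s
  set Qm : Fin K → Measure (Fin K → ℝ) := fun k => Measure.pi (ν k) with hQm
  haveI hQmprob : ∀ k, IsProbabilityMeasure (Qm k) := fun k => by
    haveI : ∀ l, IsProbabilityMeasure (ν k l) := hνprob k
    rw [hQm]
    infer_instance
  set Q : Measure (Fin K → ℝ) := ∑ k, (ENNReal.ofReal (p k)) • Qm k with hQ
  have hQapply : ∀ s : Set (Fin K → ℝ), Q s = ∑ k, ENNReal.ofReal (p k) * Qm k s := by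
    intro s
    rw [hQ, Measure.finset_sum_apply]
    simp [Measure.smul_apply, smul_eq_mul]
  have hQmmarg : ∀ (j k : Fin K) (s' : ℝ), Qm j {z : Fin K → ℝ | z k ≤ s'} = ν j k (Iic s') := by
    intro j k s'
    haveI : ∀ l, IsProbabilityMeasure (ν j l) := hνprob j
    have : {z : Fin K → ℝ | z k ≤ s'} = Function.eval k ⁻¹' (Iic s') := rfl
    rw [this, ← Measure.map_apply (measurable_pi_apply k) measurableSet_Iic, hQm,
      pi_map_eval (ν j) k]
  have hQprob : IsProbabilityMeasure Q := by
    constructor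
    rw [hQapply]
    have : ∀ k : Fin K, ENNReal.ofReal (p k) * Qm k univ = ENNReal.ofReal (p k) := by
      intro k
      haveI := hQmprob k
      rw [measure_univ, mul_one]
    rw [Finset.sum_congr rfl (fun k _ => this k), ← ENNReal.ofReal_sum_of_nonneg
      (fun k _ => hp0 k), hp1, ENNReal.ofReal_one]
  have hQmarg : ∀ (k : Fin K) (s' : ℝ), Q {z : Fin K → ℝ | z k ≤ s'} = ENNReal.ofReal (F k s') := by
    intro k s'
    rw [hQapply]
    have hterm : ∀ j : Fin K, ENNReal.ofReal (p j) * Qm j {z : Fin K → ℝ | z k ≤ s'}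
        = ENNReal.ofReal (p j * max ((min (F k s') (bb j k) - aa j k) / (bb j k - aa j k)) 0) := by
      intro j
      rw [hQmmarg j k s', hνIic j k s']
      rcases le_or_gt 0 ((min (F k s') (bb j k) - aa j k) / (bb j k - aa j k)) with h | h
      · rw [max_eq_left h, ← ENNReal.ofReal_mul (hp0 j)]
      · rw [max_eq_right (le_of_lt h), mul_zero, ENNReal.ofReal_zero,
          ENNReal.ofReal_eq_zero.mpr (le_of_lt h), mul_zero]
    rw [Finset.sum_congr rfl (fun j _ => hterm j), ← ENNReal.ofReal_sum_of_nonneg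
      (fun j _ => mul_nonneg (hp0 j) (le_max_right _ _))]
    congr 1
    -- real computation
    have hsplit := Finset.sum_eq_add_sum_sdiff_singleton_of_mem (Finset.mem_univ k)
      (fun j => p j * max ((min (F k s') (bb j k) - aa j k) / (bb j k - aa j k)) 0)
    rw [hsplit]
    have hkk : aa k k = 1 - p k := by simp [haa]
    have hkk' : bb k k = 1 := by simp [hbb]
    have hoff : ∀ j ∈ Finset.univ \ {k}, p j * max ((min (F k s') (bb j k) - aa j k) / (bb j k - aa j k)) 0
        = p j * (min (F k s') (1 - p k) / (1 - p k)) := by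
      intro j hj
      have hjk : ¬ (k = j) := by
        intro h
        subst h
        simp at hj
      have h1 : aa j k = 0 := by simp [haa, hjk]
      have h2 : bb j k = 1 - p k := by simp [hbb, hjk]
      rw [h1, h2]
      have hpos' : 0 < min (F k s') (1 - p k) := lt_min (h01 k s').1 (by linarith [hlt1 k])
      rw [sub_zero, sub_zero, max_eq_left (le_of_lt (div_pos hpos' (by linarith [hlt1 k])))]
    rw [Finset.sum_congr rfl hoff, ← Finset.sum_mul, Finset.sdiff_singleton_eq_erase,
      Finset.sum_erase_eq_sub (Finset.mem_univ k), hp1, hkk, hkk']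
    have hmin1 : min (F k s') 1 = F k s' := min_eq_left (le_of_lt (h01 k s').2)
    rw [hmin1]
    have hpk := hpos k
    have hpk1 := hlt1 k
    have e1 : (1 : ℝ) - (1 - p k) = p k := by ring
    rw [e1]
    have e2 : p k * max ((F k s' - (1 - p k)) / p k) 0 = max (F k s' - (1 - p k)) 0 := by
      rcases le_total (F k s' - (1 - p k)) 0 with hc | hc
      · rw [max_eq_right hc, max_eq_right (div_nonpos_of_nonpos_of_nonneg hc (le_of_lt hpk)), mul_zero]
      · rw [max_eq_left hc, max_eq_left (div_nonneg hc (le_of_lt hpk)), mul_comm,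
          div_mul_cancel₀ _ (ne_of_gt hpk)]
    rw [e2]
    have e3 : (1 - p k) * (min (F k s') (1 - p k) / (1 - p k)) = min (F k s') (1 - p k) := by
      rw [mul_comm, div_mul_cancel₀ _ (by linarith : (1:ℝ) - p k ≠ 0)]
    rw [e3]
    rcases le_total (F k s') (1 - p k) with h | h
    · rw [max_eq_right (by linarith), min_eq_left h]; ring
    · rw [max_eq_left (by linarith), min_eq_right h]; ring
  -- the regions
  set S : Fin K → Set (Fin K → ℝ) :=
    fun k => Set.pi univ (fun l => if l = k then Ioi (x k) else Iic (x l)) with hS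
  set R : Fin K → Set (Fin K → ℝ) :=
    fun k => {z | ∀ l, l ≠ k → u l + z l < u k + z k} with hR
  have hSmeas : ∀ k, MeasurableSet (S k) := by
    intro k
    apply MeasurableSet.univ_pi
    intro l
    by_cases h : l = k <;> simp [h, measurableSet_Ioi, measurableSet_Iic]
  have hSprop : ∀ k z, z ∈ S k → (x k < z k ∧ ∀ l, l ≠ k → z l ≤ x l) := by
    intro k z hz
    rw [hS, Set.mem_univ_pi] at hz
    constructor
    · have := hz k
      simpa using this
    · intro l hl
      have := hz l
      rw [if_neg hl] at this
      exact this
  have hSsub : ∀ k, S k ⊆ R k := by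
    intro k z hz
    obtain ⟨h1, h2⟩ := hSprop k z hz
    intro l hl
    have h3 : u l + z l ≤ lam := by
      have := h2 l hl
      have := hlam l
      linarith
    have h4 : lam < u k + z k := by
      have := hlam k
      linarith
    linarith
  have hνIicx : ∀ j l, l ≠ j → ν j l (Iic (x l)) = 1 := by
    intro j l hl
    rw [hνIic j l (x l), hFx l]
    have h1 : aa j l = 0 := by simp [haa, hl]
    have h2 : bb j l = 1 - p l := by simp [hbb, hl]
    rw [h1, h2, sub_zero, sub_zero, min_self, div_self (by linarith [hlt1 l] : (1:ℝ) - p l ≠ 0),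
      ENNReal.ofReal_one]
  have hνIoix : ∀ k, ν k k (Ioi (x k)) = 1 := by
    intro k
    haveI := hνprob k k
    have hIic0 : ν k k (Iic (x k)) = 0 := by
      rw [hνIic k k (x k), hFx k]
      have h1 : aa k k = 1 - p k := by simp [haa]
      have h2 : bb k k = 1 := by simp [hbb]
      rw [h1, h2, min_eq_left (by linarith [hpos k]), sub_self, zero_div, ENNReal.ofReal_zero]
    have := measure_compl (μ := ν k k) (measurableSet_Iic (a := x k)) (measure_ne_top _ _)
    rw [compl_Iic] at this
    rw [this, hIic0, measure_univ, tsub_zero]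
  have hQmS : ∀ k, Qm k (S k) = 1 := by
    intro k
    haveI : ∀ l, IsProbabilityMeasure (ν k l) := hνprob k
    rw [hQm, hS]
    rw [Measure.pi_pi]
    have : ∀ l : Fin K, ν k l (if l = k then Ioi (x k) else Iic (x l))
        = 1 := by
      intro l
      by_cases h : l = k
      · subst h
        rw [if_pos rfl, hνIoix l]
      · rw [if_neg h, hνIicx k l (fun hh => h hh)]
    rw [Finset.prod_congr rfl (fun l _ => this l)]
    simp
  have hRmeas : ∀ k, MeasurableSet (R k) := by
    intro k
    have hRk : R k = ⋂ l, {z : Fin K → ℝ | l ≠ k → u l + z l < u k + z k} := by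
      ext z; simp [hR]
    rw [hRk]
    apply MeasurableSet.iInter
    intro l
    by_cases h : l = k
    · subst h
      simp only [ne_eq, not_true_eq_false, false_implies, setOf_true]
      exact MeasurableSet.univ
    · have : {z : Fin K → ℝ | l ≠ k → u l + z l < u k + z k}
          = {z : Fin K → ℝ | u l + z l < u k + z k} := by
        ext z; simp [h]
      rw [this]
      exact measurableSet_lt (by fun_prop) (by fun_prop)
  have hQmR : ∀ k, Qm k (R k) = 1 := by
    intro k
    haveI := hQmprob k
    refine le_antisymm prob_le_one ?_
    rw [← hQmS k]
    exact measure_mono (hSsub k)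
  have hQmjR : ∀ j k, j ≠ k → Qm j (R k) = 0 := by
    intro j k hjk
    haveI := hQmprob j
    have hdisj : R k ⊆ (S j)ᶜ := by
      intro z hz hzS
      obtain ⟨h1, h2⟩ := hSprop j z hzS
      have h3 : z k ≤ x k := h2 k (Ne.symm hjk)
      have h4 : u j + z j < u k + z k := hz j hjk
      have h5 : u k + z k ≤ lam := by have := hlam k; linarith
      have h6 : lam < u j + z j := by have := hlam j; linarith
      linarith
    have hScompl : Qm j ((S j)ᶜ) = 0 := by
      rw [measure_compl (hSmeas j) (measure_ne_top _ _), hQmS j, measure_univ, tsub_self]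
    exact le_antisymm (le_trans (measure_mono hdisj) (le_of_eq hScompl)) zero_le
  have hQR : ∀ k, Q (R k) = ENNReal.ofReal (p k) := by
    intro k
    rw [hQapply]
    have : ∀ j : Fin K, ENNReal.ofReal (p j) * Qm j (R k)
        = if j = k then ENNReal.ofReal (p k) else 0 := by
      intro j
      by_cases h : j = k
      · subst h
        rw [if_pos rfl, hQmR j, mul_one]
      · rw [if_neg h, hQmjR j k h, mul_zero]
    rw [Finset.sum_congr rfl (fun j _ => this j), Finset.sum_ite_eq' Finset.univ k]
    simp
  -- integrability
  have hzQm : ∀ k j, Integrable (fun z : Fin K → ℝ => z j) (Qm k) := by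
    intro k j
    haveI : ∀ l, IsProbabilityMeasure (ν k l) := hνprob k
    have hmap : (Qm k).map (fun z : Fin K → ℝ => z j) = ν k j := pi_map_eval (ν k) j
    have hid : Integrable (fun x : ℝ => x) (ν k j) := by
      rw [hν]
      exact integrable_id_map_quantile (hmono j) (hcont j) (h01 j) (hbot j) (htop j)
        (hint j) (haa0 k j) (hbb1 k j) (hab k j)
    rw [← hmap] at hid
    have hid' : Integrable id ((Qm k).map (fun z : Fin K → ℝ => z j)) := hid
    have := (integrable_map_measure (f := fun z : Fin K → ℝ => z j) (g := fun x : ℝ => x)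
      aestronglyMeasurable_id (measurable_pi_apply j).aemeasurable).mp hid'
    exact this
  have hzQ : ∀ j, Integrable (fun z : Fin K → ℝ => z j) Q := by
    intro j
    rw [hQ]
    refine integrable_finset_sum_measure.mpr (fun k _ => ?_)
    exact (hzQm k j).smul_measure ENNReal.ofReal_ne_top
  have hsupcont : Continuous (fun z : Fin K → ℝ => ⨆ k, u k + z k) := by
    have heq : (fun z : Fin K → ℝ => ⨆ k, u k + z k)
        = fun z => Finset.univ.sup' Finset.univ_nonempty (fun k => u k + z k) := by
      funext z
      rw [Finset.sup'_univ_eq_ciSup]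
    rw [heq]
    exact Continuous.finset_sup'_apply Finset.univ_nonempty
      (fun k _ => continuous_const.add (continuous_apply k))
  have hbddsup : ∀ z : Fin K → ℝ, ‖⨆ k, u k + z k‖ ≤ ∑ j, (|u j| + |z j|) := by
    intro z
    have hnn : ∀ j : Fin K, (0:ℝ) ≤ |u j| + |z j| := fun j => by positivity
    have hterm : ∀ j : Fin K, |u j| + |z j| ≤ ∑ i, (|u i| + |z i|) := fun j =>
      Finset.single_le_sum (fun i _ => hnn i) (Finset.mem_univ j)
    rw [Real.norm_eq_abs, abs_le]
    constructor
    · have h1 : -(∑ i, (|u i| + |z i|)) ≤ u (Classical.arbitrary (Fin K)) + z (Classical.arbitrary (Fin K)) := by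
        have := hterm (Classical.arbitrary (Fin K))
        have := abs_add_le (u (Classical.arbitrary (Fin K))) (z (Classical.arbitrary (Fin K)))
        have := neg_abs_le (u (Classical.arbitrary (Fin K)) + z (Classical.arbitrary (Fin K)))
        have habs : |u (Classical.arbitrary (Fin K)) + z (Classical.arbitrary (Fin K))|
            ≤ |u (Classical.arbitrary (Fin K))| + |z (Classical.arbitrary (Fin K))| :=
          abs_add_le _ _
        linarith
      refine le_trans h1 (le_ciSup (f := fun k => u k + z k) ?_ (Classical.arbitrary (Fin K)))
      exact Set.Finite.bddAbove (Set.finite_range _)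
    · refine ciSup_le (fun j => ?_)
      have habs : u j + z j ≤ |u j| + |z j| :=
        le_trans (le_abs_self _) (abs_add_le _ _)
      linarith [hterm j]
  have hsupint_any : ∀ (μ : Measure (Fin K → ℝ)), IsProbabilityMeasure μ →
      (∀ j, Integrable (fun z : Fin K → ℝ => z j) μ) →
      Integrable (fun z : Fin K → ℝ => ⨆ k, u k + z k) μ := by
    intro μ hμprob hμint
    haveI := hμprob
    refine Integrable.mono' (g := fun z => ∑ j, (|u j| + |z j|)) ?_
      hsupcont.aestronglyMeasurable (Filter.Eventually.of_forall hbddsup)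
    apply integrable_finset_sum
    intro j _
    exact (integrable_const _).add (hμint j).abs
  haveI := hQprob
  have hQsupint : Integrable (fun z : Fin K → ℝ => ⨆ k, u k + z k) Q :=
    hsupint_any Q hQprob hzQ
  -- the function g
  set g : Fin K → (Fin K → ℝ) → ℝ := fun k z => max (u k + z k - lam) 0 with hg
  have hgnonneg : ∀ k z, 0 ≤ g k z := fun k z => le_max_right _ _
  have hbddrange : ∀ z : Fin K → ℝ, BddAbove (Set.range fun k => u k + z k) :=
    fun z => Set.Finite.bddAbove (Set.finite_range _)
  have h_i : ∀ z : Fin K → ℝ, (⨆ k, u k + z k) ≤ lam + ∑ k, g k z := by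
    intro z
    refine ciSup_le (fun j => ?_)
    have h1 : u j + z j - lam ≤ g j z := le_max_left _ _
    have h2 : g j z ≤ ∑ k, g k z :=
      Finset.single_le_sum (fun k _ => hgnonneg k z) (Finset.mem_univ j)
    linarith
  have h_onS : ∀ (k : Fin K) (z : Fin K → ℝ), z ∈ S k →
      (⨆ j, u j + z j) = lam + ∑ j, g j z := by
    intro k z hz
    obtain ⟨h1, h2⟩ := hSprop k z hz
    have hgt : lam < u k + z k := by have := hlam k; linarith
    have hle : ∀ l, l ≠ k → u l + z l ≤ lam := by
      intro l hl
      have := h2 l hl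
      have := hlam l
      linarith
    have hsup : (⨆ j, u j + z j) = u k + z k := by
      refine le_antisymm (ciSup_le (fun j => ?_)) (le_ciSup (hbddrange z) k)
      by_cases hj : j = k
      · subst hj; exact le_rfl
      · linarith [hle j hj]
    have hsum : ∑ j, g j z = u k + z k - lam := by
      rw [Finset.sum_eq_single k]
      · rw [hg]; dsimp only; rw [max_eq_left (by linarith)]
      · intro l _ hl
        rw [hg]; dsimp only; rw [max_eq_right (by linarith [hle l hl])]
      · intro h; exact absurd (Finset.mem_univ k) h
    rw [hsup, hsum]
    ring
  have h_ae : ∀ᵐ z ∂Q, (⨆ j, u j + z j) = lam + ∑ j, g j z := by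
    rw [ae_iff]
    have hN : ∀ k : Fin K, Qm k {z : Fin K → ℝ | ¬ ((⨆ j, u j + z j) = lam + ∑ j, g j z)} = 0 := by
      intro k
      refine measure_mono_null (fun z hz => ?_) (show Qm k ((S k)ᶜ) = 0 from ?_)
      · intro hzS
        exact hz (h_onS k z hzS)
      · haveI := hQmprob k
        rw [measure_compl (hSmeas k) (measure_ne_top _ _), hQmS k, measure_univ, tsub_self]
    rw [hQapply]
    rw [Finset.sum_congr rfl (fun k _ => by rw [hN k, mul_zero])]
    simp
  have hgcont : ∀ k, Continuous (g k) := fun k =>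
    ((continuous_const.add (continuous_apply k)).sub continuous_const).max continuous_const
  have hgint : ∀ (μ : Measure (Fin K → ℝ)), IsProbabilityMeasure μ →
      Integrable (fun z : Fin K → ℝ => ⨆ j, u j + z j) μ → ∀ k, Integrable (g k) μ := by
    intro μ hμprob hμsup k
    haveI := hμprob
    refine Integrable.mono' (g := fun z => |⨆ j, u j + z j| + |lam|)
      (hμsup.abs.add (integrable_const _)) (hgcont k).aestronglyMeasurable
      (Filter.Eventually.of_forall (fun z => ?_))
    rw [Real.norm_eq_abs, abs_of_nonneg (hgnonneg k z)]
    have h1 : u k + z k ≤ ⨆ j, u j + z j := le_ciSup (hbddrange z) k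
    have h2 : (⨆ j, u j + z j) ≤ |⨆ j, u j + z j| := le_abs_self _
    have h3 : -|lam| ≤ lam := neg_abs_le _
    rcases le_total (u k + z k - lam) 0 with hc | hc
    · rw [hg]; dsimp only; rw [max_eq_right hc]; positivity
    · rw [hg]; dsimp only; rw [max_eq_left hc]; linarith
  -- equality of marginal laws
  have hlaw : ∀ Q' : Measure (Fin K → ℝ), Q' ∈ marginalSet F → ∀ k,
      Q'.map (fun z : Fin K → ℝ => z k) = Q.map (fun z : Fin K → ℝ => z k) := by
    intro Q' hQ' k
    haveI := hQ'.1
    haveI : IsProbabilityMeasure (Q'.map (fun z : Fin K → ℝ => z k)) :=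
      Measure.isProbabilityMeasure_map (measurable_pi_apply k).aemeasurable
    haveI : IsFiniteMeasure (Q'.map (fun z : Fin K → ℝ => z k)) := by infer_instance
    refine Measure.ext_of_Iic _ _ (fun a => ?_)
    rw [Measure.map_apply (measurable_pi_apply k) measurableSet_Iic,
      Measure.map_apply (measurable_pi_apply k) measurableSet_Iic]
    have hpre : (fun z : Fin K → ℝ => z k) ⁻¹' (Iic a) = {z : Fin K → ℝ | z k ≤ a} := rfl
    rw [hpre, hQ'.2 k a, hQmarg k a]
  have hgeq : ∀ Q' : Measure (Fin K → ℝ), Q' ∈ marginalSet F → ∀ k,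
      ∫ z, g k z ∂Q' = ∫ z, g k z ∂Q := by
    intro Q' hQ' k
    have hφ : Continuous (fun t : ℝ => max (u k + t - lam) 0) :=
      ((continuous_const.add continuous_id).sub continuous_const).max continuous_const
    have e1 : ∫ z, g k z ∂Q' = ∫ t, max (u k + t - lam) 0 ∂(Q'.map (fun z : Fin K → ℝ => z k)) := by
      rw [integral_map (measurable_pi_apply k).aemeasurable hφ.aestronglyMeasurable]
    have e2 : ∫ z, g k z ∂Q = ∫ t, max (u k + t - lam) 0 ∂(Q.map (fun z : Fin K → ℝ => z k)) := by
      rw [integral_map (measurable_pi_apply k).aemeasurable hφ.aestronglyMeasurable]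
    rw [e1, e2, hlaw Q' hQ' k]
  -- final assembly
  refine ⟨Q, ⟨hQprob, hQmarg⟩, hQsupint, ?_, ?_⟩
  · intro Q' hQ' hQ'int
    haveI := hQ'.1
    have hintg' : ∀ k, Integrable (g k) Q' := hgint Q' hQ'.1 hQ'int
    have hintg : ∀ k, Integrable (g k) Q := hgint Q hQprob hQsupint
    have hintsum' : Integrable (fun z => lam + ∑ k, g k z) Q' :=
      (integrable_const _).add (integrable_finset_sum _ (fun k _ => hintg' k))
    have hintsum : Integrable (fun z => lam + ∑ k, g k z) Q :=
      (integrable_const _).add (integrable_finset_sum _ (fun k _ => hintg k))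
    calc ∫ z, (⨆ k, u k + z k) ∂Q' ≤ ∫ z, (lam + ∑ k, g k z) ∂Q' :=
        integral_mono hQ'int hintsum' h_i
    _ = lam + ∑ k, ∫ z, g k z ∂Q' := by
        rw [integral_add (integrable_const _) (integrable_finset_sum _ (fun k _ => hintg' k)),
          integral_finset_sum _ (fun k _ => hintg' k)]
        simp
    _ = lam + ∑ k, ∫ z, g k z ∂Q := by
        rw [Finset.sum_congr rfl (fun k _ => hgeq Q' hQ' k)]
    _ = ∫ z, (lam + ∑ k, g k z) ∂Q := by
        rw [integral_add (integrable_const _) (integrable_finset_sum _ (fun k _ => hintg k)),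
          integral_finset_sum _ (fun k _ => hintg k)]
        simp
    _ = ∫ z, (⨆ k, u k + z k) ∂Q := (integral_congr_ae h_ae).symm
  · intro k
    exact hQR k
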